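/- Let (a_N)_{N ≥ 1} be a sequence with a_N ∈ ℝ^{N+1} such that sup_N ‖a_N‖_∞ < ∞, ‖F_N(a_N)‖_∞ → 0 as N → ∞, and suppose there are C > 0 and N₂ ≥ 1 such that for all N ≥ N₂ the Jacobian matrix DF_N(a_N) is invertible with operator norm ‖DF_N(a_N)^{−1}‖ ≤ C (operator norm induced by the ∞-norm on ℝ^{N+1}). Then there exists N₀ ≥ 1 such that for every N ≥ N₀ there is a vector a*_N ∈ ℝ^{N+1} with F_N(a*_N) = 0 and DF_N(a*_N) invertible, and moreover ‖a*_N − a_N‖_∞ → 0 as N → ∞. -/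

import Mathlib

/-- The rescaled matching map `F_N : ℝ^{N+1} → ℝ^{N+1}`,
`F_N(a)_n = a_n − (2/(N+1))·∑_{j=1}^{N−n} a_j·a_{n+j} − (1/(N+1))·∑_{j=0}^{n} a_j·a_{n−j}`,
realised on `Fin (N+1) → ℝ` (whose norm is the maximum norm). -/
noncomputable def FNfin (N : ℕ) (a : Fin (N + 1) → ℝ) : Fin (N + 1) → ℝ :=
  fun n =>
    let b : ℕ → ℝ := fun k => if h : k < N + 1 then a ⟨k, h⟩ else 0
    b n - (2 / ((N : ℝ) + 1)) * ∑ j ∈ Finset.Icc 1 (N - (n : ℕ)), b j * b ((n : ℕ) + j)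
        - (1 / ((N : ℝ) + 1)) * ∑ j ∈ Finset.range ((n : ℕ) + 1), b j * b ((n : ℕ) - j)


/-- extension of a vector to ℕ by zero -/
noncomputable def extv (N : ℕ) (x : Fin (N + 1) → ℝ) : ℕ → ℝ :=
  fun k => if h : k < N + 1 then x ⟨k, h⟩ else 0

lemma extv_add (N : ℕ) (x y : Fin (N + 1) → ℝ) :
    extv N (x + y) = extv N x + extv N y := by
  funext k; by_cases h : k < N + 1 <;> simp [extv, h]

lemma extv_sub (N : ℕ) (x y : Fin (N + 1) → ℝ) :
    extv N (x - y) = extv N x - extv N y := by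
  funext k; by_cases h : k < N + 1 <;> simp [extv, h]

lemma extv_smul (N : ℕ) (c : ℝ) (x : Fin (N + 1) → ℝ) :
    extv N (c • x) = c • extv N x := by
  funext k; by_cases h : k < N + 1 <;> simp [extv, h]

lemma abs_extv_le (N : ℕ) (x : Fin (N + 1) → ℝ) (k : ℕ) : |extv N x k| ≤ ‖x‖ := by
  by_cases h : k < N + 1
  · simpa [extv, h, ← Real.norm_eq_abs] using norm_le_pi_norm x ⟨k, h⟩
  · simp [extv, h]

/-- the quadratic (bilinear) part of `FNfin` -/
noncomputable def Bfun (N : ℕ) (x y : Fin (N + 1) → ℝ) : Fin (N + 1) → ℝ :=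
  fun n =>
    (2 / ((N : ℝ) + 1)) * ∑ j ∈ Finset.Icc 1 (N - (n : ℕ)), extv N x j * extv N y ((n : ℕ) + j)
      + (1 / ((N : ℝ) + 1)) * ∑ j ∈ Finset.range ((n : ℕ) + 1), extv N x j * extv N y ((n : ℕ) - j)

lemma FNfin_eq (N : ℕ) (x : Fin (N + 1) → ℝ) :
    FNfin N x = x - Bfun N x x := by
  funext n
  have h : FNfin N x n = extv N x (n : ℕ)
      - (2 / ((N : ℝ) + 1)) * ∑ j ∈ Finset.Icc 1 (N - (n : ℕ)), extv N x j * extv N x ((n : ℕ) + j)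
      - (1 / ((N : ℝ) + 1)) * ∑ j ∈ Finset.range ((n : ℕ) + 1), extv N x j * extv N x ((n : ℕ) - j) := rfl
  rw [h]
  have hn : extv N x (n : ℕ) = x n := by simp [extv, n.isLt]
  rw [hn]
  simp only [Bfun, Pi.sub_apply]
  ring

lemma Bfun_add_left (N : ℕ) (x x' y : Fin (N + 1) → ℝ) :
    Bfun N (x + x') y = Bfun N x y + Bfun N x' y := by
  funext n
  simp only [Bfun, extv_add, Pi.add_apply, add_mul, Finset.sum_add_distrib, mul_add]
  ring

lemma Bfun_add_right (N : ℕ) (x y y' : Fin (N + 1) → ℝ) :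
    Bfun N x (y + y') = Bfun N x y + Bfun N x y' := by
  funext n
  simp only [Bfun, extv_add, Pi.add_apply, mul_add, Finset.sum_add_distrib]
  ring

lemma Bfun_sub_left (N : ℕ) (x x' y : Fin (N + 1) → ℝ) :
    Bfun N (x - x') y = Bfun N x y - Bfun N x' y := by
  funext n
  simp only [Bfun, extv_sub, Pi.sub_apply, sub_mul, Finset.sum_sub_distrib, mul_sub]
  ring

lemma Bfun_sub_right (N : ℕ) (x y y' : Fin (N + 1) → ℝ) :
    Bfun N x (y - y') = Bfun N x y - Bfun N x y' := by
  funext n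
  simp only [Bfun, extv_sub, Pi.sub_apply, mul_sub, Finset.sum_sub_distrib]
  ring

lemma Bfun_smul_left (N : ℕ) (c : ℝ) (x y : Fin (N + 1) → ℝ) :
    Bfun N (c • x) y = c • Bfun N x y := by
  funext n
  simp only [Bfun, extv_smul, Pi.smul_apply, smul_eq_mul, mul_assoc, ← Finset.mul_sum]
  ring

lemma Bfun_smul_right (N : ℕ) (c : ℝ) (x y : Fin (N + 1) → ℝ) :
    Bfun N x (c • y) = c • Bfun N x y := by
  funext n
  simp only [Bfun, extv_smul, Pi.smul_apply, smul_eq_mul, mul_left_comm, ← Finset.mul_sum]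
  ring

lemma Bfun_norm_le (N : ℕ) (x y : Fin (N + 1) → ℝ) :
    ‖Bfun N x y‖ ≤ 2 * ‖x‖ * ‖y‖ := by
  have hP : (0:ℝ) ≤ ‖x‖ * ‖y‖ := by positivity
  rw [pi_norm_le_iff_of_nonneg (by positivity)]
  intro n
  rw [Real.norm_eq_abs]
  set m := (n : ℕ) with hm
  have hmN : m ≤ N := Nat.lt_succ_iff.mp n.isLt
  have hterm : ∀ (S : Finset ℕ) (g : ℕ → ℕ),
      |∑ j ∈ S, extv N x j * extv N y (g j)| ≤ (S.card : ℝ) * (‖x‖ * ‖y‖) := by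
    intro S g
    calc |∑ j ∈ S, extv N x j * extv N y (g j)|
        ≤ ∑ j ∈ S, |extv N x j * extv N y (g j)| := Finset.abs_sum_le_sum_abs _ _
      _ ≤ ∑ j ∈ S, ‖x‖ * ‖y‖ := by
          refine Finset.sum_le_sum fun j _ => ?_
          rw [abs_mul]
          exact mul_le_mul (abs_extv_le N x j) (abs_extv_le N y (g j)) (abs_nonneg _)
            (norm_nonneg _)
      _ = (S.card : ℝ) * (‖x‖ * ‖y‖) := by rw [Finset.sum_const, nsmul_eq_mul]
  have h1 := hterm (Finset.Icc 1 (N - m)) (fun j => m + j)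
  have h2 := hterm (Finset.range (m + 1)) (fun j => m - j)
  rw [Nat.card_Icc] at h1
  rw [Finset.card_range] at h2
  have hpos : (0:ℝ) < (N : ℝ) + 1 := by positivity
  have hcast1 : ((N - m + 1 - 1 : ℕ) : ℝ) = (N : ℝ) - m := by
    have : N - m + 1 - 1 = N - m := by omega
    rw [this, Nat.cast_sub hmN]
  have hcast2 : ((m + 1 : ℕ) : ℝ) = (m : ℝ) + 1 := by push_cast; ring
  rw [hcast1] at h1
  rw [hcast2] at h2
  have hmR : (m : ℝ) ≤ N := by exact_mod_cast hmN
  calc |(2 / ((N : ℝ) + 1)) * ∑ j ∈ Finset.Icc 1 (N - m), extv N x j * extv N y (m + j)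
      + (1 / ((N : ℝ) + 1)) * ∑ j ∈ Finset.range (m + 1), extv N x j * extv N y (m - j)|
      ≤ (2 / ((N : ℝ) + 1)) * |∑ j ∈ Finset.Icc 1 (N - m), extv N x j * extv N y (m + j)|
        + (1 / ((N : ℝ) + 1)) * |∑ j ∈ Finset.range (m + 1), extv N x j * extv N y (m - j)| := by
        refine (abs_add_le _ _).trans ?_
        rw [abs_mul, abs_mul]
        gcongr <;> · rw [abs_of_nonneg (by positivity)]
    _ ≤ (2 / ((N : ℝ) + 1)) * (((N : ℝ) - m) * (‖x‖ * ‖y‖))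
        + (1 / ((N : ℝ) + 1)) * (((m : ℝ) + 1) * (‖x‖ * ‖y‖)) := by
        gcongr <;> positivity
    _ ≤ 2 * ‖x‖ * ‖y‖ := by
        rw [div_mul_eq_mul_div, div_mul_eq_mul_div, ← add_div,
          div_le_iff₀ hpos]
        nlinarith [hP, hmR, Nat.cast_nonneg (α := ℝ) m]

/-- the derivative of `FNfin N` at `x`, as a continuous linear map -/
noncomputable def Lmap (N : ℕ) (x : Fin (N + 1) → ℝ) :
    (Fin (N + 1) → ℝ) →L[ℝ] (Fin (N + 1) → ℝ) :=
  LinearMap.toContinuousLinearMap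
    { toFun := fun h => h - (Bfun N x h + Bfun N h x)
      map_add' := by
        intro h k
        rw [Bfun_add_right, Bfun_add_left]
        abel
      map_smul' := by
        intro c h
        rw [Bfun_smul_right, Bfun_smul_left, RingHom.id_apply, smul_sub, smul_add]
      }

lemma Lmap_apply (N : ℕ) (x h : Fin (N + 1) → ℝ) :
    Lmap N x h = h - (Bfun N x h + Bfun N h x) := rfl

lemma Bfun_zero_left (N : ℕ) (y : Fin (N + 1) → ℝ) : Bfun N 0 y = 0 := by
  have := Bfun_smul_left N 0 0 y
  simpa using this

lemma Bfun_zero_right (N : ℕ) (x : Fin (N + 1) → ℝ) : Bfun N x 0 = 0 := by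
  have := Bfun_smul_right N 0 x 0
  simpa using this

/-- exact second-order Taylor identity -/
lemma key_identity (N : ℕ) (z x y : Fin (N + 1) → ℝ) :
    FNfin N x - FNfin N y - Lmap N z (x - y)
      = -(Bfun N (x - y) (x - y)) - Bfun N (x - y) (y - z) - Bfun N (y - z) (x - y) := by
  rw [FNfin_eq, FNfin_eq, Lmap_apply]
  simp only [Bfun_sub_left, Bfun_sub_right]
  abel

lemma hasFDerivAt_FNfin (N : ℕ) (x : Fin (N + 1) → ℝ) :
    HasFDerivAt (FNfin N) (Lmap N x) x := by
  rw [hasFDerivAt_iff_isLittleO_nhds_zero]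
  rw [Asymptotics.isLittleO_iff]
  intro c hc
  rw [Metric.eventually_nhds_iff]
  refine ⟨c / 2, by positivity, fun h hh => ?_⟩
  have h1 : FNfin N (x + h) - FNfin N x - Lmap N x (x + h - x)
      = -(Bfun N h h) := by
    have := key_identity N x (x + h) x
    simpa [Bfun_zero_left, Bfun_zero_right] using this
  rw [show x + h - x = h by abel] at h1
  rw [h1, norm_neg]
  have hhn : ‖h‖ ≤ c / 2 := by
    rw [dist_zero_right] at hh
    exact hh.le
  calc ‖Bfun N h h‖ ≤ 2 * ‖h‖ * ‖h‖ := Bfun_norm_le N h h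
    _ ≤ 2 * (c/2) * ‖h‖ := by gcongr
    _ = c * ‖h‖ := by ring

lemma fderiv_FNfin (N : ℕ) (x : Fin (N + 1) → ℝ) :
    fderiv ℝ (FNfin N) x = Lmap N x := (hasFDerivAt_FNfin N x).fderiv

open scoped NNReal

lemma exists_root (N : ℕ) (C : ℝ) (hC : 0 < C) (x : Fin (N + 1) → ℝ)
    (J : (Fin (N + 1) → ℝ) ≃L[ℝ] (Fin (N + 1) → ℝ))
    (hJd : (J : (Fin (N + 1) → ℝ) →L[ℝ] (Fin (N + 1) → ℝ)) = fderiv ℝ (FNfin N) x)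
    (hJC : ‖(J.symm : (Fin (N + 1) → ℝ) →L[ℝ] (Fin (N + 1) → ℝ))‖ ≤ C)
    (hε : ‖FNfin N x‖ ≤ (32 * C ^ 2)⁻¹) :
    ∃ y, FNfin N y = 0 ∧
      (∃ J' : (Fin (N + 1) → ℝ) ≃L[ℝ] (Fin (N + 1) → ℝ),
        (J' : (Fin (N + 1) → ℝ) →L[ℝ] (Fin (N + 1) → ℝ)) = fderiv ℝ (FNfin N) y) ∧
      ‖y - x‖ ≤ 2 * C * ‖FNfin N x‖ := by
  set ε := ‖FNfin N x‖ with hεdef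
  have hε0 : 0 ≤ ε := norm_nonneg _
  set r := 2 * C * ε with hrdef
  have hr0 : 0 ≤ r := by positivity
  have hJL : (J : (Fin (N + 1) → ℝ) →L[ℝ] (Fin (N + 1) → ℝ)) = Lmap N x :=
    hJd.trans (fderiv_FNfin N x)
  set s := ‖(J.symm : (Fin (N + 1) → ℝ) →L[ℝ] (Fin (N + 1) → ℝ))‖ with hsdef
  have hs0 : 0 < s := by
    rw [hsdef, norm_pos_iff]
    intro h0
    have hu : (fun _ => (1:ℝ) : Fin (N + 1) → ℝ)
        = (J.symm : (Fin (N + 1) → ℝ) →L[ℝ] (Fin (N + 1) → ℝ)) (J (fun _ => (1:ℝ))) := by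
      simp
    rw [h0] at hu
    have := congrFun hu 0
    simp at this
  have h32 : 32 * C ^ 2 * ε ≤ 1 := by
    have h := mul_le_mul_of_nonneg_left hε (by positivity : (0:ℝ) ≤ 32 * C ^ 2)
    rwa [mul_inv_cancel₀ (by positivity : (32 * C ^ 2 : ℝ) ≠ 0)] at h
  -- linear approximation on the closed ball of radius r
  have happrox : ApproximatesLinearOn (FNfin N)
      (J : (Fin (N + 1) → ℝ) →L[ℝ] (Fin (N + 1) → ℝ))
      (Metric.closedBall x r) (Real.toNNReal (8 * r)) := by
    intro p hp q hq
    rw [hJL]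
    have hid := key_identity N x p q
    rw [Metric.mem_closedBall, dist_eq_norm] at hp hq
    have hpq : ‖p - q‖ ≤ 2 * r := by
      calc ‖p - q‖ = ‖(p - x) - (q - x)‖ := by abel_nf
        _ ≤ ‖p - x‖ + ‖q - x‖ := norm_sub_le _ _
        _ ≤ r + r := add_le_add hp hq
        _ = 2 * r := by ring
    have hcoe : ((Real.toNNReal (8 * r) : ℝ≥0) : ℝ) = 8 * r :=
      Real.coe_toNNReal _ (by positivity)
    rw [hcoe, hid]
    calc ‖-(Bfun N (p - q) (p - q)) - Bfun N (p - q) (q - x) - Bfun N (q - x) (p - q)‖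
        ≤ ‖Bfun N (p - q) (p - q)‖ + ‖Bfun N (p - q) (q - x)‖ + ‖Bfun N (q - x) (p - q)‖ := by
          refine (norm_sub_le _ _).trans ?_
          gcongr
          refine (norm_sub_le _ _).trans ?_
          rw [norm_neg]
      _ ≤ 2 * ‖p - q‖ * ‖p - q‖ + 2 * ‖p - q‖ * ‖q - x‖ + 2 * ‖q - x‖ * ‖p - q‖ := by
          gcongr <;> exact Bfun_norm_le N _ _
      _ ≤ 2 * ‖p - q‖ * (2 * r) + 2 * ‖p - q‖ * r + 2 * r * ‖p - q‖ := by
          gcongr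
      _ ≤ 8 * r * ‖p - q‖ := by nlinarith [norm_nonneg (p - q)]
  have hsurj := happrox.surjOn_closedBall_of_nonlinearRightInverse
    J.toNonlinearRightInverse hr0 subset_rfl
  have hmem : (0 : Fin (N + 1) → ℝ) ∈ Metric.closedBall (FNfin N x)
      (((J.toNonlinearRightInverse.nnnorm : ℝ)⁻¹ - (Real.toNNReal (8 * r) : ℝ≥0)) * r) := by
    rw [Metric.mem_closedBall, dist_comm, dist_zero_right]
    have hnn : ((J.toNonlinearRightInverse.nnnorm : ℝ)) = s := rfl
    have hcoe : ((Real.toNNReal (8 * r) : ℝ≥0) : ℝ) = 8 * r :=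
      Real.coe_toNNReal _ (by positivity)
    rw [hnn, hcoe]
    have hCinv : C⁻¹ ≤ s⁻¹ := inv_anti₀ hs0 hJC
    have hstep : ε ≤ (C⁻¹ - 8 * r) * r := by
      have hCC : C * C⁻¹ = 1 := mul_inv_cancel₀ hC.ne'
      have hkey : 0 ≤ ε * (1 - 32 * C ^ 2 * ε) := mul_nonneg hε0 (by linarith)
      rw [hrdef]
      nlinarith [hkey, hCC, hε0, hC.le]
    refine hstep.trans (mul_le_mul_of_nonneg_right (by linarith) hr0)
  obtain ⟨y, hy_mem, hfy⟩ := hsurj hmem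
  rw [Metric.mem_closedBall, dist_eq_norm] at hy_mem
  -- invertibility of the derivative at y
  set D : (Fin (N + 1) → ℝ) →L[ℝ] (Fin (N + 1) → ℝ) := Lmap N x - Lmap N y with hDdef
  have hD_apply : ∀ h, D h = Bfun N (y - x) h + Bfun N h (y - x) := by
    intro h
    rw [hDdef, ContinuousLinearMap.sub_apply, Lmap_apply, Lmap_apply,
      Bfun_sub_left, Bfun_sub_right]
    abel
  have hDnorm : ‖D‖ ≤ 4 * r := by
    refine ContinuousLinearMap.opNorm_le_bound _ (by positivity) fun h => ?_
    rw [hD_apply]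
    calc ‖Bfun N (y - x) h + Bfun N h (y - x)‖
        ≤ ‖Bfun N (y - x) h‖ + ‖Bfun N h (y - x)‖ := norm_add_le _ _
      _ ≤ 2 * ‖y - x‖ * ‖h‖ + 2 * ‖h‖ * ‖y - x‖ := by
          gcongr <;> exact Bfun_norm_le N _ _
      _ ≤ 2 * r * ‖h‖ + 2 * ‖h‖ * r := by gcongr
      _ = 4 * r * ‖h‖ := by ring
  set T : (Fin (N + 1) → ℝ) →L[ℝ] (Fin (N + 1) → ℝ) :=
    (J.symm : (Fin (N + 1) → ℝ) →L[ℝ] (Fin (N + 1) → ℝ)).comp D with hTdef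
  have hTnorm : ‖T‖ < 1 := by
    have h1 : ‖T‖ ≤ s * (4 * r) :=
      (ContinuousLinearMap.opNorm_comp_le _ _).trans (by gcongr)
    have h2 : s * (4 * r) ≤ C * (4 * (2 * C * ε)) := by
      rw [hrdef] at *
      gcongr
    have h3 : C * (4 * (2 * C * ε)) = 8 * C ^ 2 * ε := by ring
    have h4 : 8 * C ^ 2 * ε ≤ 1 / 4 := by nlinarith
    linarith
  set u : ((Fin (N + 1) → ℝ) →L[ℝ] (Fin (N + 1) → ℝ))ˣ := Units.oneSub T hTnorm with hudef
  refine ⟨y, hfy, ⟨ContinuousLinearEquiv.ofUnit (J.toUnit * u), ?_⟩, hy_mem.trans (le_refl r)⟩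
  rw [fderiv_FNfin]
  have hval : ((ContinuousLinearEquiv.ofUnit (J.toUnit * u) :
      (Fin (N + 1) → ℝ) ≃L[ℝ] (Fin (N + 1) → ℝ)) :
      (Fin (N + 1) → ℝ) →L[ℝ] (Fin (N + 1) → ℝ)) = (J.toUnit * u).val := rfl
  rw [hval]
  have : (J.toUnit * u).val
      = (J : (Fin (N + 1) → ℝ) →L[ℝ] (Fin (N + 1) → ℝ)) * ((1 : _) - T) := rfl
  rw [this]
  ext h
  rw [ContinuousLinearMap.mul_apply, ContinuousLinearMap.sub_apply,
    ContinuousLinearMap.one_apply]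
  have happ : (J : (Fin (N + 1) → ℝ) →L[ℝ] (Fin (N + 1) → ℝ)) (T h) = D h := by
    rw [hTdef, ContinuousLinearMap.comp_apply]
    simp
  rw [map_sub, happ, hJL, hDdef]
  simp

/-- if `(a_N)` is bounded in the maximum norm, `‖F_N(a_N)‖_∞ → 0`, and the
Jacobians `DF_N(a_N)` are eventually invertible with uniformly bounded inverses, then
for all large `N` there are genuine nondegenerate roots `a*_N` of `F_N` with
`‖a*_N − a_N‖_∞ → 0`. -/
theorem FN_roots_near_approximation
    (a : ∀ N : ℕ, Fin (N + 1) → ℝ)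
    (hbdd : ∃ M : ℝ, ∀ N : ℕ, 1 ≤ N → ‖a N‖ ≤ M)
    (hFto0 : Filter.Tendsto (fun N => ‖FNfin N (a N)‖) Filter.atTop (nhds 0))
    (hjac : ∃ C : ℝ, 0 < C ∧ ∃ N₂ : ℕ, 1 ≤ N₂ ∧ ∀ N, N₂ ≤ N →
      ∃ J : (Fin (N + 1) → ℝ) ≃L[ℝ] (Fin (N + 1) → ℝ),
        (J : (Fin (N + 1) → ℝ) →L[ℝ] (Fin (N + 1) → ℝ)) = fderiv ℝ (FNfin N) (a N) ∧
        ‖(J.symm : (Fin (N + 1) → ℝ) →L[ℝ] (Fin (N + 1) → ℝ))‖ ≤ C) :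
    ∃ N₀ : ℕ, 1 ≤ N₀ ∧ ∃ astar : ∀ N : ℕ, Fin (N + 1) → ℝ,
      (∀ N, N₀ ≤ N → FNfin N (astar N) = 0 ∧
        ∃ J : (Fin (N + 1) → ℝ) ≃L[ℝ] (Fin (N + 1) → ℝ),
          (J : (Fin (N + 1) → ℝ) →L[ℝ] (Fin (N + 1) → ℝ))
            = fderiv ℝ (FNfin N) (astar N)) ∧
      Filter.Tendsto (fun N => ‖astar N - a N‖) Filter.atTop (nhds 0) := by
  obtain ⟨C, hC, N₂, hN₂1, hJac⟩ := hjac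
  have hδ : (0:ℝ) < (32 * C ^ 2)⁻¹ := by positivity
  have hev : ∀ᶠ N in Filter.atTop, ‖FNfin N (a N)‖ ≤ (32 * C ^ 2)⁻¹ :=
    hFto0.eventually (eventually_le_nhds hδ)
  obtain ⟨N₃, hN₃⟩ := Filter.eventually_atTop.mp hev
  set N₀ := max N₂ N₃ with hN₀def
  have hN₀1 : 1 ≤ N₀ := le_trans hN₂1 (le_max_left _ _)
  have H : ∀ N, N₀ ≤ N → ∃ y, FNfin N y = 0 ∧
      (∃ J' : (Fin (N + 1) → ℝ) ≃L[ℝ] (Fin (N + 1) → ℝ),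
        (J' : (Fin (N + 1) → ℝ) →L[ℝ] (Fin (N + 1) → ℝ)) = fderiv ℝ (FNfin N) y) ∧
      ‖y - a N‖ ≤ 2 * C * ‖FNfin N (a N)‖ := by
    intro N hN
    obtain ⟨J, hJd, hJC⟩ := hJac N (le_trans (le_max_left _ _) hN)
    exact exists_root N C hC (a N) J hJd hJC (hN₃ N (le_trans (le_max_right _ _) hN))
  refine ⟨N₀, hN₀1, fun N => if h : N₀ ≤ N then (H N h).choose else a N,
    fun N hN => ?_, ?_⟩
  · simp only [dif_pos hN]
    exact ⟨(H N hN).choose_spec.1, (H N hN).choose_spec.2.1⟩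
  · apply squeeze_zero' (Filter.Eventually.of_forall fun N => norm_nonneg _)
      (g := fun N => 2 * C * ‖FNfin N (a N)‖)
    · refine Filter.eventually_atTop.mpr ⟨N₀, fun N hN => ?_⟩
      simp only [dif_pos hN]
      exact (H N hN).choose_spec.2.2
    · have := hFto0.const_mul (2 * C)
      simpa using this
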